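/- Let Σ be a connected graph whose path metric d_Σ is δ-hyperbolic in the sense of the Gromov 4-point condition, and let C be a positive integer. Let Ξ be the C-expansion of Σ, i.e., the graph obtained from Σ by adding an edge between every pair of vertices at distance at most C in Σ. Then the path metric of Ξ is (δ/C + 6)-hyperbolic in the sense of the Gromov 4-point condition. -/

import Mathlib

open SimpleGraph

/-- The `C`-expansion of a graph: add an edge between every pair of distinct
vertices at graph distance at most `C`. -/
def expansionGraph {V : Type*} (G : SimpleGraph V) (C : ℕ) : SimpleGraph V where
  Adj u v := u ≠ v ∧ G.dist u v ≤ C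
  symm := ⟨fun u v h => ⟨h.1.symm, by rw [SimpleGraph.dist_comm]; exact h.2⟩⟩
  loopless := ⟨fun u h => h.1 rfl⟩

lemma expGraph_walk_length_drop {V : Type*} {G : SimpleGraph V} {u v : V} (p : G.Walk u v)
    (n : ℕ) : (p.drop n).length = p.length - n := by
  induction p generalizing n with
  | nil => simp [SimpleGraph.Walk.drop]
  | cons h q ih =>
    cases n with
    | zero => simp [SimpleGraph.Walk.drop]
    | succ n => simp [SimpleGraph.Walk.drop, ih]

lemma expGraph_dist_getVert_le {V : Type*} {G : SimpleGraph V} (hconn : G.Connected) {u v : V}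
    (p : G.Walk u v) (n : ℕ) : G.dist u (p.getVert n) ≤ n := by
  induction n with
  | zero => simp [p.getVert_zero]
  | succ n ih =>
    by_cases h : n < p.length
    · calc G.dist u (p.getVert (n+1))
          ≤ G.dist u (p.getVert n) + G.dist (p.getVert n) (p.getVert (n+1)) :=
            hconn.dist_triangle
        _ ≤ n + 1 := by
            have := (SimpleGraph.dist_eq_one_iff_adj.mpr (p.adj_getVert_succ h)).le
            omega
    · rw [p.getVert_of_length_le (by omega), ← p.getVert_of_length_le (le_of_not_gt h)]
      omega

lemma expGraph_le {V : Type*} {G : SimpleGraph V} {C : ℕ} (hC : 0 < C) :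
    G ≤ expansionGraph G C := by
  intro u v h
  exact ⟨h.ne, by rw [SimpleGraph.dist_eq_one_iff_adj.mpr h]; omega⟩

/-- Lower bound: `Sg.dist u v ≤ C * Ξ.dist u v`. -/
lemma expGraph_dist_lower {V : Type*} {G : SimpleGraph V} (hconn : G.Connected) {C : ℕ}
    (hC : 0 < C) (u v : V) : G.dist u v ≤ C * (expansionGraph G C).dist u v := by
  have hΞconn : (expansionGraph G C).Connected := hconn.mono (expGraph_le hC)
  obtain ⟨q, hq⟩ := (hΞconn u v).exists_walk_length_eq_dist
  rw [← hq]
  clear hq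
  induction q with
  | nil => simp
  | cons h q ih =>
    calc G.dist _ _ ≤ G.dist _ _ + G.dist _ _ := hconn.dist_triangle
      _ ≤ C * (q.length + 1) := by
          have h1 := h.2
          nlinarith [ih]
      _ = C * (SimpleGraph.Walk.cons h q).length := by simp

/-- Upper bound: `Ξ.dist u v ≤ Sg.dist u v / C + 1`. -/
lemma expGraph_dist_upper {V : Type*} {G : SimpleGraph V} (hconn : G.Connected) {C : ℕ}
    (hC : 0 < C) (u v : V) :
    ((expansionGraph G C).dist u v : ℝ) ≤ (G.dist u v : ℝ) / C + 1 := by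
  have hΞconn : (expansionGraph G C).Connected := hconn.mono (expGraph_le hC)
  have hCR : (0:ℝ) < C := by exact_mod_cast hC
  suffices H : ∀ n : ℕ, ∀ u v : V, G.dist u v = n →
      ((expansionGraph G C).dist u v : ℝ) ≤ (n : ℝ) / C + 1 from H _ u v rfl
  intro n
  induction n using Nat.strong_induction_on with
  | _ n ih =>
    intro u v hn
    by_cases hle : n ≤ C
    · by_cases huv : u = v
      · subst huv
        simp only [SimpleGraph.dist_self, Nat.cast_zero]
        positivity
      · have hadj : (expansionGraph G C).Adj u v := ⟨huv, by omega⟩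
        rw [SimpleGraph.dist_eq_one_iff_adj.mpr hadj]
        have : (0:ℝ) ≤ (n:ℝ) / C := by positivity
        push_cast
        linarith
    · push_neg at hle
      obtain ⟨p, hp⟩ := (hconn u v).exists_walk_length_eq_dist
      rw [hn] at hp
      set m := p.getVert C with hm
      have d1 : G.dist u m ≤ C := expGraph_dist_getVert_le hconn p C
      have d2 : G.dist m v ≤ n - C := by
        have := SimpleGraph.dist_le (p.drop C)
        rwa [expGraph_walk_length_drop, hp] at this
      have htri : G.dist u v ≤ G.dist u m + G.dist m v := hconn.dist_triangle
      have hne : u ≠ m := by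
        intro h
        rw [← h] at d2
        omega
      have hadj : (expansionGraph G C).Adj u m := ⟨hne, d1⟩
      have hltn : G.dist m v < n := by omega
      have hIH := ih (G.dist m v) hltn m v rfl
      have hΞtri : (expansionGraph G C).dist u v ≤
          (expansionGraph G C).dist u m + (expansionGraph G C).dist m v := hΞconn.dist_triangle
      have h1 : (expansionGraph G C).dist u m = 1 := SimpleGraph.dist_eq_one_iff_adj.mpr hadj
      have hmv : ((G.dist m v : ℝ)) ≤ (n : ℝ) - C := by
        have : ((n - C : ℕ) : ℝ) = (n : ℝ) - C := by
          push_cast [Nat.cast_sub hle.le]; ring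
        calc ((G.dist m v : ℝ)) ≤ ((n - C : ℕ) : ℝ) := by exact_mod_cast d2
          _ = (n : ℝ) - C := this
      have hstep : ((expansionGraph G C).dist u v : ℝ) ≤
          1 + ((expansionGraph G C).dist m v : ℝ) := by
        rw [h1] at hΞtri
        exact_mod_cast hΞtri
      have h2 : (G.dist m v : ℝ) / C ≤ ((n:ℝ) - C) / C := by gcongr
      rw [sub_div, div_self (ne_of_gt hCR)] at h2
      linarith

theorem expansion_hyperbolic {V : Type*} (Sg : SimpleGraph V) (hconn : Sg.Connected)
    (δ : ℝ) (hδ0 : 0 ≤ δ) (C : ℕ) (hC : 0 < C)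
    (hδ : ∀ x y z w : V, (Sg.dist x z : ℝ) + (Sg.dist y w : ℝ) ≤
      max ((Sg.dist x y : ℝ) + (Sg.dist z w : ℝ)) ((Sg.dist x w : ℝ) + (Sg.dist z y : ℝ)) + δ) :
    ∀ x y z w : V,
      ((expansionGraph Sg C).dist x z : ℝ) + ((expansionGraph Sg C).dist y w : ℝ) ≤
      max (((expansionGraph Sg C).dist x y : ℝ) + ((expansionGraph Sg C).dist z w : ℝ))
          (((expansionGraph Sg C).dist x w : ℝ) + ((expansionGraph Sg C).dist z y : ℝ))
        + (δ / C + 6) := by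
  intro x y z w
  have hCR : (0:ℝ) < C := by exact_mod_cast hC
  -- lower bounds: Sg.dist / C ≤ Ξ.dist
  have low : ∀ a b : V, (Sg.dist a b : ℝ) / C ≤ ((expansionGraph Sg C).dist a b : ℝ) := by
    intro a b
    rw [div_le_iff₀ hCR]
    have := expGraph_dist_lower hconn hC a b
    calc (Sg.dist a b : ℝ) ≤ (C * (expansionGraph Sg C).dist a b : ℕ) := by exact_mod_cast this
      _ = ((expansionGraph Sg C).dist a b : ℝ) * C := by push_cast; ring
  have up : ∀ a b : V, ((expansionGraph Sg C).dist a b : ℝ) ≤ (Sg.dist a b : ℝ) / C + 1 :=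
    fun a b => expGraph_dist_upper hconn hC a b
  have key := hδ x y z w
  have hmax : max ((Sg.dist x y : ℝ) + (Sg.dist z w : ℝ))
      ((Sg.dist x w : ℝ) + (Sg.dist z y : ℝ)) / C ≤
      max (((expansionGraph Sg C).dist x y : ℝ) + ((expansionGraph Sg C).dist z w : ℝ))
          (((expansionGraph Sg C).dist x w : ℝ) + ((expansionGraph Sg C).dist z y : ℝ)) := by
    rcases max_cases ((Sg.dist x y : ℝ) + (Sg.dist z w : ℝ))
        ((Sg.dist x w : ℝ) + (Sg.dist z y : ℝ)) with ⟨h, _⟩ | ⟨h, _⟩ <;> rw [h]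
    · calc ((Sg.dist x y : ℝ) + (Sg.dist z w : ℝ)) / C
          = (Sg.dist x y : ℝ) / C + (Sg.dist z w : ℝ) / C := by ring
        _ ≤ ((expansionGraph Sg C).dist x y : ℝ) + ((expansionGraph Sg C).dist z w : ℝ) :=
            add_le_add (low x y) (low z w)
        _ ≤ _ := le_max_left _ _
    · calc ((Sg.dist x w : ℝ) + (Sg.dist z y : ℝ)) / C
          = (Sg.dist x w : ℝ) / C + (Sg.dist z y : ℝ) / C := by ring
        _ ≤ ((expansionGraph Sg C).dist x w : ℝ) + ((expansionGraph Sg C).dist z y : ℝ) :=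
            add_le_add (low x w) (low z y)
        _ ≤ _ := le_max_right _ _
  have step : ((expansionGraph Sg C).dist x z : ℝ) + ((expansionGraph Sg C).dist y w : ℝ)
      ≤ (Sg.dist x z : ℝ) / C + (Sg.dist y w : ℝ) / C + 2 := by
    have := up x z
    have := up y w
    linarith
  have step2 : (Sg.dist x z : ℝ) / C + (Sg.dist y w : ℝ) / C ≤
      max ((Sg.dist x y : ℝ) + (Sg.dist z w : ℝ))
        ((Sg.dist x w : ℝ) + (Sg.dist z y : ℝ)) / C + δ / C := by
    rw [← add_div, ← add_div]
    gcongr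
  linarith [hmax]
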